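/- Let λ be an eigenvalue of the Laplacian tensor L(G^{k,k/2}). Then there exist a nonempty subset U ⊆ V with the induced subgraph G[U] connected and a diagonal matrix E = diag(ε_u)_{u∈U} with every ε_u a k-th root of unity such that λ is an eigenvalue of the complex matrix D_U − E·A_U·E. Moreover, if λ is an H-eigenvalue of L(G^{k,k/2}), then there exists a nonempty U ⊆ V with G[U] connected such that λ is an eigenvalue of the real symmetric matrix D_U − A_U. -/

import Mathlib

open scoped BigOperators
open Matrix

/-- `lam` is an eigenvalue of the Laplacian tensor `L(G^{k,k/2})` of the generalized power
hypergraph `G^{k,k/2}` with eigenvector `x`. -/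
def IsLapEigenpair {V : Type*} [Fintype V] [DecidableEq V] (k s : ℕ)
    (G : SimpleGraph V) [DecidableRel G.Adj]
    (lam : ℂ) (x : V × Fin s → ℂ) : Prop :=
  x ≠ 0 ∧ ∀ (u : V) (v : Fin s),
    ((G.degree u : ℂ) - lam) * x (u, v) ^ (k - 1) =
      ∑ w ∈ G.neighborFinset u,
        (∏ p ∈ Finset.univ.erase v, x (u, p)) * ∏ q : Fin s, x (w, q)

set_option linter.unnecessarySimpa false in
lemma comp_lemma {V : Type*} [Fintype V] [DecidableEq V] (G : SimpleGraph V)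
    (W : V → Prop) (u0 : V) (h0 : W u0) :
    ∃ U : Finset V, u0 ∈ U ∧ (∀ u ∈ U, W u) ∧
      (∀ u ∈ U, ∀ w, G.Adj u w → W w → w ∈ U) ∧
      U.Nonempty ∧ (G.induce (↑U : Set V)).Connected := by
  classical
  let H : SimpleGraph V :=
    { Adj := fun a b => G.Adj a b ∧ W a ∧ W b
      symm := ⟨by rintro a b ⟨h, ha, hb⟩; exact ⟨h.symm, hb, ha⟩⟩
      loopless := ⟨by rintro a ⟨h, _⟩; exact G.irrefl h⟩ }
  let U : Finset V := Finset.univ.filter fun u => H.Reachable u0 u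
  have hmem : ∀ u, u ∈ U ↔ H.Reachable u0 u := by
    intro u; simp [U]
  have h0U : u0 ∈ U := (hmem u0).2 (SimpleGraph.Reachable.refl u0)
  have hW : ∀ u ∈ U, W u := by
    intro u hu
    obtain ⟨w⟩ := (hmem u).1 hu
    cases hw : w.reverse with
    | nil => exact h0
    | cons h p => exact h.2.1
  have hcl : ∀ u ∈ U, ∀ w, G.Adj u w → W w → w ∈ U := by
    intro u hu w hadj hw
    exact (hmem w).2 (((hmem u).1 hu).trans
      (SimpleGraph.Adj.reachable (⟨hadj, hW u hu, hw⟩ : H.Adj u w)))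
  have step : ∀ {a b : V} (w : H.Walk a b) (ha : a ∈ U),
      ∃ hb : b ∈ U,
        (G.induce (↑U : Set V)).Reachable ⟨a, by simpa using ha⟩ ⟨b, by simpa using hb⟩ := by
    intro a b w
    induction w with
    | nil => intro ha; exact ⟨ha, SimpleGraph.Reachable.refl _⟩
    | @cons a c b h p ih =>
      intro ha
      have hc : c ∈ U := hcl _ ha _ h.1 h.2.2
      obtain ⟨hb, hr⟩ := ih hc
      refine ⟨hb, SimpleGraph.Reachable.trans ?_ hr⟩
      exact SimpleGraph.Adj.reachable (by simpa using h.1)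
  refine ⟨U, h0U, hW, hcl, ⟨u0, h0U⟩, ?_⟩
  rw [SimpleGraph.connected_iff]
  refine ⟨?_, ⟨⟨u0, by simpa using h0U⟩⟩⟩
  intro a b
  have ha : a.1 ∈ U := by simpa using a.2
  have hb : b.1 ∈ U := by simpa using b.2
  obtain ⟨wa⟩ := (hmem a.1).1 ha
  obtain ⟨wb⟩ := (hmem b.1).1 hb
  obtain ⟨_, ra⟩ := step wa h0U
  obtain ⟨_, rb⟩ := step wb h0U
  have e1 : (⟨a.1, by simpa using ha⟩ : ↥(↑U : Set V)) = a := Subtype.ext rfl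
  rw [e1] at ra
  have e2 : (⟨b.1, by simpa using hb⟩ : ↥(↑U : Set V)) = b := Subtype.ext rfl
  rw [e2] at rb
  exact ra.symm.trans rb

lemma mulVec_DEAE {n : Type*} [Fintype n] [DecidableEq n] {R : Type*} [CommRing R]
    (d eps : n → R) (A : Matrix n n R) (y : n → R) (u : n) :
    ((Matrix.diagonal d - Matrix.diagonal eps * A * Matrix.diagonal eps) *ᵥ y) u
      = d u * y u - eps u * ∑ j, A u j * (eps j * y j) := by
  simp only [Matrix.mulVec, dotProduct, Matrix.sub_apply, Matrix.diagonal_mul,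
    Matrix.mul_diagonal, Matrix.diagonal_apply, ite_mul, zero_mul, sub_mul,
    Finset.sum_sub_distrib, Finset.sum_ite_eq, Finset.mem_univ, if_true, Finset.mul_sum]
  ring_nf

lemma mulVec_DA {n : Type*} [Fintype n] [DecidableEq n] {R : Type*} [CommRing R]
    (d : n → R) (A : Matrix n n R) (y : n → R) (u : n) :
    ((Matrix.diagonal d - A) *ᵥ y) u = d u * y u - ∑ j, A u j * y j := by
  simp only [Matrix.mulVec, dotProduct, Matrix.sub_apply, Matrix.diagonal_apply,
    ite_mul, zero_mul, sub_mul, Finset.sum_sub_distrib, Finset.sum_ite_eq, Finset.mem_univ,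
    if_true]

lemma pow_inj_nonneg {a b : ℝ} (ha : 0 ≤ a) (hb : 0 ≤ b) {n : ℕ} (hn : n ≠ 0)
    (h : a ^ n = b ^ n) : a = b := by
  rcases lt_trichotomy a b with h' | h' | h'
  · exact absurd h (ne_of_lt (pow_lt_pow_left₀ h' ha hn))
  · exact h'
  · exact absurd h.symm (ne_of_lt (pow_lt_pow_left₀ h' hb hn))

/-- transfer a sum over neighbors to a sum over the subtype, given closure. -/
lemma sum_nbhd {V : Type*} [Fintype V] [DecidableEq V] (G : SimpleGraph V) [DecidableRel G.Adj]
    {R : Type*} [AddCommMonoid R] (U : Finset V) (P : V → R) (u : V)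
    (hvanish : ∀ w, G.Adj u w → w ∉ U → P w = 0) :
    ∑ j : {w // w ∈ U}, (if G.Adj u j.1 then P j.1 else 0)
      = ∑ w ∈ G.neighborFinset u, P w := by
  classical
  rw [← Finset.sum_subtype U (fun x => Iff.rfl) (fun w => if G.Adj u w then P w else 0)]
  rw [Finset.sum_subset (Finset.subset_univ U)]
  · rw [SimpleGraph.neighborFinset_eq_filter, Finset.sum_filter]
  · intro w _ hw
    by_cases h : G.Adj u w
    · simp [h, hvanish w h hw]
    · simp [h]

theorem stmt5 {V : Type*} [Fintype V] [DecidableEq V] (k s : ℕ)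
    (hk : 4 ≤ k) (hks : k = 2 * s) (G : SimpleGraph V) [DecidableRel G.Adj]
    (lam : ℂ) (hlam : ∃ x : V × Fin s → ℂ, IsLapEigenpair k s G lam x) :
    (∃ U : Finset V, U.Nonempty ∧ (G.induce (↑U : Set V)).Connected ∧
      ∃ eps : {u // u ∈ U} → ℂ, (∀ u, eps u ^ k = 1) ∧
        ∃ y : {u // u ∈ U} → ℂ, y ≠ 0 ∧
          (Matrix.diagonal (fun u : {u // u ∈ U} => (G.degree u.1 : ℂ)) -
              Matrix.diagonal eps * (G.adjMatrix ℂ).submatrix Subtype.val Subtype.val *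
                Matrix.diagonal eps) *ᵥ y = lam • y) ∧
    (∀ lamr : ℝ, lam = (lamr : ℂ) →
      (∃ xr : V × Fin s → ℝ, IsLapEigenpair k s G lam (fun v => (xr v : ℂ))) →
      ∃ U : Finset V, U.Nonempty ∧ (G.induce (↑U : Set V)).Connected ∧
        ∃ y : {u // u ∈ U} → ℝ, y ≠ 0 ∧
          (Matrix.diagonal (fun u : {u // u ∈ U} => (G.degree u.1 : ℝ)) -
              (G.adjMatrix ℝ).submatrix Subtype.val Subtype.val) *ᵥ y = lamr • y) := by
  classical
  have hs2 : 2 ≤ s := by omega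
  have hspos : 0 < s := by omega
  constructor
  · -- complex part
    obtain ⟨x, hx0, heq⟩ := hlam
    set P : V → ℂ := fun u => ∏ q : Fin s, x (u, q) with hPdef
    have key : ∀ u v, ((G.degree u : ℂ) - lam) * x (u, v) ^ k
        = P u * ∑ w ∈ G.neighborFinset u, P w := by
      intro u v
      have hxp : x (u, v) * x (u, v) ^ (k - 1) = x (u, v) ^ k := by
        rw [← pow_succ']
        congr 1
        omega
      have h1 : ((G.degree u : ℂ) - lam) * x (u, v) ^ k
          = x (u, v) * (((G.degree u : ℂ) - lam) * x (u, v) ^ (k - 1)) := by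
        rw [← mul_assoc, mul_comm (x (u, v)), mul_assoc, hxp]
      rw [h1, heq u v, Finset.mul_sum, Finset.mul_sum]
      refine Finset.sum_congr rfl fun w _ => ?_
      rw [← mul_assoc, Finset.mul_prod_erase Finset.univ (fun p => x (u, p)) (Finset.mem_univ v)]
    by_cases hex : ∃ u0, P u0 ≠ 0
    · obtain ⟨u0, hu0⟩ := hex
      obtain ⟨U, h0U, hWU, hcl, hUne, hconn⟩ := comp_lemma G (fun u => P u ≠ 0) u0 hu0
      set v0 : Fin s := ⟨0, hspos⟩ with hv0
      set z : V → ℂ := fun u => x (u, v0) ^ s with hzdef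
      have hxne : ∀ u, P u ≠ 0 → ∀ v, x (u, v) ≠ 0 := by
        intro u hu v hx
        exact hu (Finset.prod_eq_zero (Finset.mem_univ v) hx)
      have hzne : ∀ u, P u ≠ 0 → z u ≠ 0 := fun u hu =>
        pow_ne_zero _ (hxne u hu v0)
      have hz2 : ∀ u, z u ^ 2 = x (u, v0) ^ k := by
        intro u
        show (x (u, v0) ^ s) ^ 2 = x (u, v0) ^ k
        rw [← pow_mul]
        congr 1
        omega
      have factA : ∀ u, ((G.degree u : ℂ) - lam) * z u ^ 2
          = P u * ∑ w ∈ G.neighborFinset u, P w := by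
        intro u
        rw [hz2 u]
        exact key u v0
      have hconst : ∀ u, ((G.degree u : ℂ) - lam) ≠ 0 → ∀ v, x (u, v) ^ k = x (u, v0) ^ k := by
        intro u hd v
        exact mul_left_cancel₀ hd ((key u v).trans (key u v0).symm)
      have hPk : ∀ u, ((G.degree u : ℂ) - lam) ≠ 0 → P u ^ k = (x (u, v0) ^ k) ^ s := by
        intro u hd
        rw [hPdef]
        simp only
        rw [← Finset.prod_pow]
        rw [Finset.prod_congr rfl (fun v _ => hconst u hd v)]
        rw [Finset.prod_const, Finset.card_univ, Fintype.card_fin]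
      set eps : {u // u ∈ U} → ℂ := fun u =>
        if ((G.degree u.1 : ℂ) - lam) = 0 then 1 else P u.1 / z u.1 with hepsdef
      set y : {u // u ∈ U} → ℂ := fun u =>
        if ((G.degree u.1 : ℂ) - lam) = 0 then P u.1 else z u.1 with hydef
      have hepsy : ∀ u : {u // u ∈ U}, eps u * y u = P u.1 := by
        intro u
        simp only [hepsdef, hydef]
        by_cases hd : ((G.degree u.1 : ℂ) - lam) = 0
        · simp [hd]
        · simp only [hd, if_false]
          exact div_mul_cancel₀ _ (hzne u.1 (hWU u.1 u.2))
      refine ⟨U, hUne, hconn, eps, ?_, y, ?_, ?_⟩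
      · -- eps ^ k = 1
        intro u
        simp only [hepsdef]
        by_cases hd : ((G.degree u.1 : ℂ) - lam) = 0
        · simp [hd]
        · simp only [hd, if_false]
          rw [div_pow, hPk u.1 hd]
          have hzk : z u.1 ^ k = (x (u.1, v0) ^ k) ^ s := by
            show (x (u.1, v0) ^ s) ^ k = (x (u.1, v0) ^ k) ^ s
            rw [← pow_mul, ← pow_mul, mul_comm]
          rw [hzk]
          exact div_self (pow_ne_zero _ (pow_ne_zero _ (hxne u.1 (hWU u.1 u.2) v0)))
      · -- y ≠ 0
        intro h
        have h0 := congrFun h ⟨u0, h0U⟩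
        simp only [hydef, Pi.zero_apply] at h0
        by_cases hd : ((G.degree u0 : ℂ) - lam) = 0
        · rw [if_pos hd] at h0; exact hu0 h0
        · rw [if_neg hd] at h0; exact hzne u0 hu0 h0
      · -- matrix equation
        funext u
        rw [mulVec_DEAE]
        have hsum : ∑ j : {w // w ∈ U},
            ((G.adjMatrix ℂ).submatrix Subtype.val Subtype.val) u j * (eps j * y j)
            = ∑ w ∈ G.neighborFinset u.1, P w := by
          rw [← sum_nbhd G U P u.1 (fun w hadj hw => by
            by_contra hPw
            exact hw (hcl u.1 u.2 w hadj hPw))]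
          refine Finset.sum_congr rfl fun j _ => ?_
          rw [Matrix.submatrix_apply, SimpleGraph.adjMatrix_apply, hepsy j]
          by_cases h : G.Adj u.1 j.1 <;> simp [h]
        rw [hsum]
        have hrow : ∑ w ∈ G.neighborFinset u.1, P w = 0 ∨
            eps u * ∑ w ∈ G.neighborFinset u.1, P w = ((G.degree u.1 : ℂ) - lam) * y u := by
          by_cases hd : ((G.degree u.1 : ℂ) - lam) = 0
          · left
            have hA := factA u.1
            rw [hd, zero_mul] at hA
            rcases mul_eq_zero.1 hA.symm with h | h
            · exact absurd h (hWU u.1 u.2)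
            · exact h
          · right
            simp only [hepsdef, hydef, hd, if_false]
            have hz := hzne u.1 (hWU u.1 u.2)
            rw [div_mul_eq_mul_div, div_eq_iff hz]
            linear_combination (-1 : ℂ) * factA u.1
        rcases hrow with h | h
        · rw [h, mul_zero]
          have hd : ((G.degree u.1 : ℂ) - lam) = 0 ∨ True := by
            by_cases hd : ((G.degree u.1 : ℂ) - lam) = 0
            · exact Or.inl hd
            · exact Or.inr trivial
          -- in this branch the degree must equal lam
          have hd' : ((G.degree u.1 : ℂ) - lam) = 0 := by
            by_contra hd'
            -- then eps u * sum = (d - lam) * y u, but sum = 0 so (d-lam)*y u = 0, y u = z ≠ 0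
            have hA := factA u.1
            rw [h, mul_zero] at hA
            rcases mul_eq_zero.1 hA with h2 | h2
            · exact hd' h2
            · exact pow_ne_zero 2 (hzne u.1 (hWU u.1 u.2)) h2
          have hy : y u = P u.1 := by simp only [hydef, hd', if_true, if_pos]
          have hlam' : (G.degree u.1 : ℂ) = lam := sub_eq_zero.mp hd'
          simp only [Pi.smul_apply, smul_eq_mul, hlam']
          ring
        · rw [h]
          simp only [Pi.smul_apply, smul_eq_mul]
          ring
    · -- all products zero
      push_neg at hex
      have hzero : ∀ u v, ((G.degree u : ℂ) - lam) * x (u, v) ^ (k - 1) = 0 := by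
        intro u v
        rw [heq u v]
        refine Finset.sum_eq_zero fun w _ => ?_
        have hw : (∏ q : Fin s, x (w, q)) = 0 := hex w
        rw [hw, mul_zero]
      obtain ⟨⟨u, v⟩, huv⟩ : ∃ p, x p ≠ 0 := by
        by_contra h
        push_neg at h
        exact hx0 (funext h)
      have hd : ((G.degree u : ℂ) - lam) = 0 := by
        rcases mul_eq_zero.1 (hzero u v) with h | h
        · exact h
        · exact absurd ((pow_eq_zero_iff (by omega : k - 1 ≠ 0)).1 h) huv
      obtain ⟨U, h0U, hWU, _, hUne, hconn⟩ := comp_lemma G (fun w => w = u) u rfl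
      refine ⟨U, hUne, hconn, fun _ => 1, fun _ => one_pow k, fun _ => 1, ?_, ?_⟩
      · intro h
        simpa using congrFun h ⟨u, h0U⟩
      · funext j
        rw [mulVec_DEAE]
        have hzsum : ∑ i : {w // w ∈ U},
            ((G.adjMatrix ℂ).submatrix Subtype.val Subtype.val) j i * ((1 : ℂ) * 1) = 0 := by
          refine Finset.sum_eq_zero fun i _ => ?_
          rw [Matrix.submatrix_apply, SimpleGraph.adjMatrix_apply]
          rw [hWU j.1 j.2, hWU i.1 i.2]
          simp
        rw [hzsum]
        have hj : j.1 = u := hWU j.1 j.2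
        rw [hj]
        have hlam' : (G.degree u : ℂ) = lam := sub_eq_zero.mp hd
        simp [hlam']
  · -- real part
    intro lamr hl hxr
    obtain ⟨xr, hxr0, heqC⟩ := hxr
    set Pr : V → ℝ := fun u => ∏ q : Fin s, xr (u, q) with hPrdef
    have heqr : ∀ u v, ((G.degree u : ℝ) - lamr) * xr (u, v) ^ (k - 1) =
        ∑ w ∈ G.neighborFinset u,
          (∏ p ∈ Finset.univ.erase v, xr (u, p)) * ∏ q : Fin s, xr (w, q) := by
      intro u v
      have h := heqC u v
      rw [hl] at h
      dsimp only at h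
      exact_mod_cast h
    have key : ∀ u v, ((G.degree u : ℝ) - lamr) * xr (u, v) ^ k
        = Pr u * ∑ w ∈ G.neighborFinset u, Pr w := by
      intro u v
      have hxp : xr (u, v) * xr (u, v) ^ (k - 1) = xr (u, v) ^ k := by
        rw [← pow_succ']
        congr 1
        omega
      have h1 : ((G.degree u : ℝ) - lamr) * xr (u, v) ^ k
          = xr (u, v) * (((G.degree u : ℝ) - lamr) * xr (u, v) ^ (k - 1)) := by
        rw [← mul_assoc, mul_comm (xr (u, v)), mul_assoc, hxp]
      rw [h1, heqr u v, Finset.mul_sum, Finset.mul_sum]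
      refine Finset.sum_congr rfl fun w _ => ?_
      rw [← mul_assoc, Finset.mul_prod_erase Finset.univ (fun p => xr (u, p)) (Finset.mem_univ v)]
    by_cases hex : ∃ u0, Pr u0 ≠ 0
    · obtain ⟨u0, hu0⟩ := hex
      obtain ⟨U, h0U, hWU, hcl, hUne, hconn⟩ := comp_lemma G (fun u => Pr u ≠ 0) u0 hu0
      set v0 : Fin s := ⟨0, hspos⟩ with hv0
      set z : V → ℝ := fun u => xr (u, v0) ^ s with hzdef
      have hxne : ∀ u, Pr u ≠ 0 → ∀ v, xr (u, v) ≠ 0 := by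
        intro u hu v hx
        exact hu (Finset.prod_eq_zero (Finset.mem_univ v) hx)
      have hz2 : ∀ u, z u ^ 2 = xr (u, v0) ^ k := by
        intro u
        show (xr (u, v0) ^ s) ^ 2 = xr (u, v0) ^ k
        rw [← pow_mul]
        congr 1
        omega
      have factA : ∀ u, ((G.degree u : ℝ) - lamr) * z u ^ 2
          = Pr u * ∑ w ∈ G.neighborFinset u, Pr w := by
        intro u
        rw [hz2 u]
        exact key u v0
      have main : ∀ u, Pr u ≠ 0 →
          ((G.degree u : ℝ) - lamr) * Pr u = ∑ w ∈ G.neighborFinset u, Pr w := by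
        intro u hP
        by_cases hd : ((G.degree u : ℝ) - lamr) = 0
        · have hA := factA u
          rw [hd, zero_mul] at hA
          rcases mul_eq_zero.1 hA.symm with h | h
          · exact absurd h hP
          · rw [hd, zero_mul, h]
        · have hconst : ∀ v, xr (u, v) ^ k = xr (u, v0) ^ k := fun v =>
            mul_left_cancel₀ hd ((key u v).trans (key u v0).symm)
          have hPk : Pr u ^ k = (xr (u, v0) ^ k) ^ s := by
            rw [hPrdef]
            simp only
            rw [← Finset.prod_pow]
            rw [Finset.prod_congr rfl (fun v _ => hconst v)]
            rw [Finset.prod_const, Finset.card_univ, Fintype.card_fin]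
          have hP2 : Pr u ^ 2 = z u ^ 2 := by
            apply pow_inj_nonneg (sq_nonneg _) (sq_nonneg _) (show s ≠ 0 by omega)
            calc (Pr u ^ 2) ^ s = Pr u ^ (2 * s) := by rw [← pow_mul]
              _ = Pr u ^ k := by rw [hks]
              _ = (xr (u, v0) ^ k) ^ s := hPk
              _ = (z u ^ 2) ^ s := by rw [hz2]
          refine mul_left_cancel₀ hP ?_
          calc Pr u * (((G.degree u : ℝ) - lamr) * Pr u)
              = ((G.degree u : ℝ) - lamr) * Pr u ^ 2 := by ring
            _ = ((G.degree u : ℝ) - lamr) * z u ^ 2 := by rw [hP2]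
            _ = Pr u * ∑ w ∈ G.neighborFinset u, Pr w := factA u
      refine ⟨U, hUne, hconn, fun u => Pr u.1, ?_, ?_⟩
      · intro h
        exact hu0 (by simpa using congrFun h ⟨u0, h0U⟩)
      · funext u
        rw [mulVec_DA]
        have hsum : ∑ j : {w // w ∈ U},
            ((G.adjMatrix ℝ).submatrix Subtype.val Subtype.val) u j * Pr j.1
            = ∑ w ∈ G.neighborFinset u.1, Pr w := by
          rw [← sum_nbhd G U Pr u.1 (fun w hadj hw => by
            by_contra hPw
            exact hw (hcl u.1 u.2 w hadj hPw))]
          refine Finset.sum_congr rfl fun j _ => ?_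
          rw [Matrix.submatrix_apply, SimpleGraph.adjMatrix_apply]
          by_cases h : G.Adj u.1 j.1 <;> simp [h]
        rw [hsum, ← main u.1 (hWU u.1 u.2)]
        simp only [Pi.smul_apply, smul_eq_mul]
        ring
    · -- all products zero
      push_neg at hex
      have hxr0' : xr ≠ 0 := by
        intro h
        apply hxr0
        funext v
        simp [h]
      have hzero : ∀ u v, ((G.degree u : ℝ) - lamr) * xr (u, v) ^ (k - 1) = 0 := by
        intro u v
        rw [heqr u v]
        refine Finset.sum_eq_zero fun w _ => ?_
        have hw : (∏ q : Fin s, xr (w, q)) = 0 := hex w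
        rw [hw, mul_zero]
      obtain ⟨⟨u, v⟩, huv⟩ : ∃ p, xr p ≠ 0 := by
        by_contra h
        push_neg at h
        exact hxr0' (funext h)
      have hd : ((G.degree u : ℝ) - lamr) = 0 := by
        rcases mul_eq_zero.1 (hzero u v) with h | h
        · exact h
        · exact absurd ((pow_eq_zero_iff (by omega : k - 1 ≠ 0)).1 h) huv
      obtain ⟨U, h0U, hWU, _, hUne, hconn⟩ := comp_lemma G (fun w => w = u) u rfl
      refine ⟨U, hUne, hconn, fun _ => 1, ?_, ?_⟩
      · intro h
        simpa using congrFun h ⟨u, h0U⟩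
      · funext j
        rw [mulVec_DA]
        have hzsum : ∑ i : {w // w ∈ U},
            ((G.adjMatrix ℝ).submatrix Subtype.val Subtype.val) j i * 1 = 0 := by
          refine Finset.sum_eq_zero fun i _ => ?_
          rw [Matrix.submatrix_apply, SimpleGraph.adjMatrix_apply]
          rw [hWU j.1 j.2, hWU i.1 i.2]
          simp
        rw [hzsum]
        have hj : j.1 = u := hWU j.1 j.2
        rw [hj]
        have hlam' : (G.degree u : ℝ) = lamr := sub_eq_zero.mp hd
        simp [hlam']
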